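/- Let r ≥ 2 and let δ = Δ(A_r) ∩ {x ∈ ℝ^{r+1} : x_0 + x_1 = 1}. Then the set of weight-lattice points lying on δ, i.e. M(A_r) ∩ δ, equals {e_0 − e_k : 2 ≤ k ≤ r} ∪ {e_1 − e_k : 2 ≤ k ≤ r} when r ≠ 3, and when r = 3 it equals that set together with the one additional point (1/2)(e_0 + e_1 − e_2 − e_3). -/

import Mathlib

noncomputable section

/-- The standard basis vector `e i` of `ℝ^(r+1)`. -/
def e (r : ℕ) (i : Fin (r + 1)) : Fin (r + 1) → ℝ := Pi.single i 1

/-- The roots of type `A_r`: the vectors `e i - e j` for `i ≠ j`. -/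
def rootsA (r : ℕ) : Set (Fin (r + 1) → ℝ) :=
  {v | ∃ i j : Fin (r + 1), i ≠ j ∧ v = e r i - e r j}

/-- The root polytope of type `A_r`: the convex hull of the roots. -/
def DeltaA (r : ℕ) : Set (Fin (r + 1) → ℝ) := convexHull ℝ (rootsA r)

/-- The weight lattice of type `A_r`: the additive subgroup generated by the roots
together with `e 0 - (e 0 + ⋯ + e r)/(r+1)`. -/
def MA (r : ℕ) : AddSubgroup (Fin (r + 1) → ℝ) :=
  AddSubgroup.closure (rootsA r ∪ {e r 0 - ((r : ℝ) + 1)⁻¹ • ∑ i, e r i})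

lemma e_apply (r : ℕ) (i j : Fin (r+1)) : e r i j = if j = i then 1 else 0 := by
  simp [e, Pi.single_apply]

-- small Fin facts
lemma fin_val_one (r : ℕ) (hr : 2 ≤ r) : ((1 : Fin (r+1)) : ℕ) = 1 := by
  rw [Fin.val_one']
  exact Nat.mod_eq_of_lt (by omega)

lemma fin_one_ne_zero (r : ℕ) (hr : 2 ≤ r) : (1 : Fin (r+1)) ≠ 0 := by
  intro h
  have := congrArg Fin.val h
  rw [fin_val_one r hr] at this
  simp at this

lemma fin_val_ge (r : ℕ) (hr : 2 ≤ r) (k : Fin (r+1)) (h0 : k ≠ 0) (h1 : k ≠ 1) :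
    2 ≤ (k : ℕ) := by
  have hv0 : (k : ℕ) ≠ 0 := fun h => h0 (Fin.ext (by simpa using h))
  have hv1 : (k : ℕ) ≠ 1 := fun h => h1 (Fin.ext (by rw [h, fin_val_one r hr]))
  omega

lemma fin_ne_of_val (r : ℕ) (hr : 2 ≤ r) (k : Fin (r+1)) (hk : 2 ≤ (k : ℕ)) :
    k ≠ 0 ∧ k ≠ 1 := by
  constructor
  · intro h; rw [h] at hk; simp at hk
  · intro h; rw [h, fin_val_one r hr] at hk; omega

def Tset (r : ℕ) : Finset (Fin (r+1)) := (Finset.univ.erase 0).erase 1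

lemma mem_Tset (r : ℕ) (j : Fin (r+1)) : j ∈ Tset r ↔ j ≠ 0 ∧ j ≠ 1 := by
  simp [Tset, Finset.mem_erase, and_comm]

lemma sum_split (r : ℕ) (hr : 2 ≤ r) (f : Fin (r+1) → ℝ) :
    ∑ i, f i = f 0 + (f 1 + ∑ i ∈ Tset r, f i) := by
  have h1mem : (1 : Fin (r+1)) ∈ Finset.univ.erase 0 :=
    Finset.mem_erase.2 ⟨fin_one_ne_zero r hr, Finset.mem_univ _⟩
  rw [← Finset.add_sum_erase _ f (Finset.mem_univ 0), ← Finset.add_sum_erase _ f h1mem]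
  rfl

lemma card_Tset (r : ℕ) (hr : 2 ≤ r) : (Tset r).card = r - 1 := by
  have h1mem : (1 : Fin (r+1)) ∈ Finset.univ.erase 0 :=
    Finset.mem_erase.2 ⟨fin_one_ne_zero r hr, Finset.mem_univ _⟩
  rw [Tset, Finset.card_erase_of_mem h1mem,
    Finset.card_erase_of_mem (Finset.mem_univ 0), Finset.card_univ, Fintype.card_fin]

  omega

lemma root_mem (r : ℕ) {i j : Fin (r+1)} (hij : i ≠ j) :
    (e r i - e r j) ∈ MA r ∧ (e r i - e r j) ∈ DeltaA r := by
  have hroot : (e r i - e r j) ∈ rootsA r := ⟨i, j, hij, rfl⟩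
  exact ⟨AddSubgroup.subset_closure (Or.inl hroot), subset_convexHull ℝ _ hroot⟩

lemma back_dir (r : ℕ) (hr : 2 ≤ r) {x : Fin (r+1) → ℝ}
    (hx : ∃ k : Fin (r+1), 2 ≤ (k : ℕ) ∧ (x = e r 0 - e r k ∨ x = e r 1 - e r k)) :
    x ∈ MA r ∧ x ∈ DeltaA r ∧ x 0 + x 1 = 1 := by
  obtain ⟨k, hk, hcase⟩ := hx
  obtain ⟨hk0, hk1⟩ := fin_ne_of_val r hr k hk
  have h10 : (1 : Fin (r+1)) ≠ 0 := fin_one_ne_zero r hr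
  rcases hcase with rfl | rfl
  · obtain ⟨h1, h2⟩ := root_mem r hk0.symm
    refine ⟨h1, h2, ?_⟩
    simp [e_apply, hk0.symm, hk1.symm, h10]
  · obtain ⟨h1, h2⟩ := root_mem r hk1.symm
    refine ⟨h1, h2, ?_⟩
    simp [e_apply, hk0.symm, hk1.symm, h10, h10.symm]

lemma case_int (r : ℕ) (x : Fin (r+1) → ℝ) (a b : Fin (r+1)) (hab : a ≠ b)
    (hTdef : ∀ j, j ∈ Tset r ↔ (j ≠ a ∧ j ≠ b))
    (hxa : x a = 1) (hxb : x b = 0)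
    (hsumT : ∑ i ∈ Tset r, x i = -1)
    (hxT : ∀ i ∈ Tset r, x i ≤ 0)
    (hint : ∀ i ∈ Tset r, ∃ n : ℤ, x i = n) :
    ∃ k ∈ Tset r, x = e r a - e r k := by
  have hne : ∃ k ∈ Tset r, x k ≠ 0 := by
    by_contra h
    push_neg at h
    rw [Finset.sum_eq_zero h] at hsumT
    norm_num at hsumT
  obtain ⟨k, hkT, hk0⟩ := hne
  have hkneg : x k < 0 := lt_of_le_of_ne (hxT k hkT) hk0
  have hrest : ∑ i ∈ (Tset r).erase k, x i = -1 - x k := by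
    rw [← Finset.add_sum_erase _ x hkT] at hsumT; linarith
  have hrestle : ∑ i ∈ (Tset r).erase k, x i ≤ 0 :=
    Finset.sum_nonpos fun i hi => hxT i (Finset.mem_of_mem_erase hi)
  have hkge : (-1 : ℝ) ≤ x k := by linarith
  obtain ⟨n, hn⟩ := hint k hkT
  have hk1 : x k = -1 := by
    rw [hn] at hkge hkneg ⊢
    have h1 : -1 ≤ n := by exact_mod_cast hkge
    have h2 : n < 0 := by exact_mod_cast hkneg
    have : n = -1 := by omega
    rw [this]; norm_num
  have hzero : ∀ i ∈ (Tset r).erase k, x i = 0 := by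
    have hs0 : ∑ i ∈ (Tset r).erase k, x i = 0 := by rw [hrest, hk1]; ring
    intro i hi
    have := (Finset.sum_eq_zero_iff_of_nonpos
      (fun i hi => hxT i (Finset.mem_of_mem_erase hi))).1 hs0
    exact this i hi
  refine ⟨k, hkT, ?_⟩
  have hka : k ≠ a := ((hTdef k).1 hkT).1
  have hkb : k ≠ b := ((hTdef k).1 hkT).2
  funext j
  simp only [Pi.sub_apply, e_apply]
  rcases eq_or_ne j a with rfl | hja
  · simp [hxa, hka.symm]
  rcases eq_or_ne j k with rfl | hjk
  · simp [hk1, hka]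
  rcases eq_or_ne j b with rfl | hjb
  · simp [hxb, hab.symm, hjk]
  · have hjT : j ∈ (Tset r).erase k :=
      Finset.mem_erase.2 ⟨hjk, (hTdef j).2 ⟨hja, hjb⟩⟩
    simp [hzero j hjT, hja, hjk]

lemma v0 : ((0 : Fin (3+1)) : ℕ) = 0 := rfl
lemma v1 : ((1 : Fin (3+1)) : ℕ) = 1 := rfl
lemma v2 : ((2 : Fin (3+1)) : ℕ) = 2 := rfl
lemma v3 : ((3 : Fin (3+1)) : ℕ) = 3 := rfl

lemma sum_e_at (r : ℕ) (c : Fin (r+1)) : (∑ i, e r i) c = 1 := by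
  rw [Finset.sum_apply]; simp [e_apply]

lemma p3_mem_MA : ((1/2:ℝ) • (e 3 0 + e 3 1 - e 3 2 - e 3 3)) ∈ MA 3 := by
  have hω : (e 3 0 - (((3:ℕ):ℝ) + 1)⁻¹ • ∑ i, e 3 i) ∈ MA 3 :=
    AddSubgroup.subset_closure (Or.inr rfl)
  have hroot : (e 3 0 - e 3 1) ∈ MA 3 := (root_mem 3 (by decide)).1
  have heq : (1/2:ℝ) • (e 3 0 + e 3 1 - e 3 2 - e 3 3) =
      (e 3 0 - (((3:ℕ):ℝ)+1)⁻¹ • ∑ i, e 3 i) +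
        (e 3 0 - (((3:ℕ):ℝ)+1)⁻¹ • ∑ i, e 3 i) - (e 3 0 - e 3 1) := by
    funext j
    simp only [Pi.smul_apply, Pi.add_apply, Pi.sub_apply, smul_eq_mul, sum_e_at, e_apply]
    fin_cases j <;> norm_num [Fin.ext_iff, v0, v1, v2, v3]
  rw [heq]
  exact sub_mem (add_mem hω hω) hroot

lemma p3_mem_Delta : ((1/2:ℝ) • (e 3 0 + e 3 1 - e 3 2 - e 3 3)) ∈ DeltaA 3 := by
  have h1 : (e 3 0 - e 3 2) ∈ DeltaA 3 := (root_mem 3 (by decide)).2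
  have h2 : (e 3 1 - e 3 3) ∈ DeltaA 3 := (root_mem 3 (by decide)).2
  have hc := (convex_convexHull ℝ (rootsA 3)) h1 h2
    (by norm_num : (0:ℝ) ≤ 1/2) (by norm_num : (0:ℝ) ≤ 1/2) (by norm_num)
  have heq : (1/2:ℝ) • (e 3 0 + e 3 1 - e 3 2 - e 3 3) =
      (1/2:ℝ) • (e 3 0 - e 3 2) + (1/2:ℝ) • (e 3 1 - e 3 3) := by
    funext j
    simp only [Pi.smul_apply, Pi.add_apply, Pi.sub_apply, smul_eq_mul, e_apply]
    fin_cases j <;> norm_num [Fin.ext_iff, v0, v1, v2, v3]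
  rw [heq]
  exact hc

lemma p3_sum : ((1/2:ℝ) • (e 3 0 + e 3 1 - e 3 2 - e 3 3)) 0 +
    ((1/2:ℝ) • (e 3 0 + e 3 1 - e 3 2 - e 3 3)) 1 = 1 := by
  simp only [Pi.smul_apply, Pi.add_apply, Pi.sub_apply, smul_eq_mul, e_apply]
  norm_num [Fin.ext_iff, v0, v1, v2, v3]

lemma x_eq_p3 (x : Fin (3+1) → ℝ) (h0 : x 0 = 1/2) (h1 : x 1 = 1/2)
    (hT : ∀ j : Fin (3+1), j ≠ 0 → j ≠ 1 → x j = -1/2) :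
    x = (1/2:ℝ) • (e 3 0 + e 3 1 - e 3 2 - e 3 3) := by
  funext j
  simp only [Pi.smul_apply, Pi.add_apply, Pi.sub_apply, smul_eq_mul, e_apply]
  fin_cases j
  · simpa using h0
  · simpa using h1
  · have := hT 2 (by decide) (by decide)
    simpa [show (-1/2 : ℝ) = -2⁻¹ by norm_num] using this
  · have := hT 3 (by decide) (by decide)
    simpa [show (-1/2 : ℝ) = -2⁻¹ by norm_num] using this

lemma mem_DeltaA' (r : ℕ) {x : Fin (r+1) → ℝ} (hx : x ∈ DeltaA r) :
    (∑ i, x i = 0) ∧ ∑ i, max (x i) 0 ≤ 1 := by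
  have hconv : Convex ℝ {y : Fin (r+1) → ℝ | (∑ i, y i = 0) ∧ ∑ i, max (y i) 0 ≤ 1} := by
    intro u hu v hv a b ha hb hab
    constructor
    · simp only [Pi.add_apply, Pi.smul_apply, smul_eq_mul]
      rw [Finset.sum_add_distrib, ← Finset.mul_sum, ← Finset.mul_sum, hu.1, hv.1]
      ring
    · calc ∑ i, max ((a • u + b • v) i) 0
          ≤ ∑ i, (a * max (u i) 0 + b * max (v i) 0) := by
            apply Finset.sum_le_sum
            intro i _
            simp only [Pi.add_apply, Pi.smul_apply, smul_eq_mul]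
            apply max_le
            · have h1 : a * u i ≤ a * max (u i) 0 :=
                mul_le_mul_of_nonneg_left (le_max_left _ _) ha
              have h2 : b * v i ≤ b * max (v i) 0 :=
                mul_le_mul_of_nonneg_left (le_max_left _ _) hb
              linarith
            · positivity
        _ ≤ 1 := by
            rw [Finset.sum_add_distrib, ← Finset.mul_sum, ← Finset.mul_sum]
            have := hu.2; have := hv.2
            nlinarith [Finset.sum_nonneg (fun i (_ : i ∈ Finset.univ) => le_max_right (u i) (0:ℝ)),
              Finset.sum_nonneg (fun i (_ : i ∈ Finset.univ) => le_max_right (v i) (0:ℝ))]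
  have hsub : rootsA r ⊆ {y : Fin (r+1) → ℝ | (∑ i, y i = 0) ∧ ∑ i, max (y i) 0 ≤ 1} := by
    rintro v ⟨i, j, hij, rfl⟩
    constructor
    · simp [Finset.sum_sub_distrib, show ∀ k : Fin (r+1), ∑ l, e r k l = 1 from
        fun k => by simp [e_apply]]
    · have : ∀ k, max ((e r i - e r j) k) 0 = if k = i then 1 else 0 := by
        intro k
        rcases eq_or_ne k i with rfl | hki
        · simp [e_apply, hij, hij.symm]
        · rcases eq_or_ne k j with rfl | hkj
          · simp [e_apply, hki]
          · simp [e_apply, hki, hkj]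
      rw [Finset.sum_congr rfl (fun k _ => this k)]
      simp
  exact convexHull_min hsub hconv hx

lemma mem_MA' (r : ℕ) {x : Fin (r+1) → ℝ} (hx : x ∈ MA r) :
    (∑ i, x i = 0) ∧ ∀ i j, ∃ n : ℤ, x i - x j = n := by
  let S : AddSubgroup (Fin (r+1) → ℝ) :=
    { carrier := {y | (∑ i, y i = 0) ∧ ∀ i j, ∃ n : ℤ, y i - y j = n}
      zero_mem' := by
        refine ⟨by simp, fun i j => ⟨0, by simp⟩⟩
      add_mem' := by
        rintro u v ⟨hu1, hu2⟩ ⟨hv1, hv2⟩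
        refine ⟨by simp [Finset.sum_add_distrib, hu1, hv1], fun i j => ?_⟩
        obtain ⟨n, hn⟩ := hu2 i j
        obtain ⟨m, hm⟩ := hv2 i j
        exact ⟨n + m, by push_cast; simp only [Pi.add_apply]; linarith⟩
      neg_mem' := by
        rintro u ⟨hu1, hu2⟩
        refine ⟨by simp [hu1], fun i j => ?_⟩
        obtain ⟨n, hn⟩ := hu2 i j
        exact ⟨-n, by push_cast; simp only [Pi.neg_apply]; linarith⟩ }
  have hle : MA r ≤ S := by
    rw [MA, AddSubgroup.closure_le]
    rintro v (⟨i, j, hij, rfl⟩ | hv)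
    · constructor
      · simp [Finset.sum_sub_distrib, show ∀ k : Fin (r+1), ∑ l, e r k l = 1 from
          fun k => by simp [e_apply]]
      · intro a b
        refine ⟨(if a = i then 1 else 0) - (if a = j then 1 else 0)
          - ((if b = i then 1 else 0) - (if b = j then 1 else 0)), ?_⟩
        simp only [Pi.sub_apply, e_apply]
        push_cast
        split_ifs <;> ring
    · simp only [Set.mem_singleton_iff] at hv
      subst hv
      constructor
      · have hr1 : ((r : ℝ) + 1) ≠ 0 := by positivity
        simp only [Pi.sub_apply, Pi.smul_apply, smul_eq_mul, sum_e_at, mul_one]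
        rw [Finset.sum_sub_distrib, Finset.sum_const, Finset.card_univ]
        simp [e_apply]
        field_simp
        norm_num
      · intro a b
        refine ⟨(if a = 0 then 1 else 0) - (if b = 0 then 1 else 0), ?_⟩
        simp only [Pi.sub_apply, Pi.smul_apply, smul_eq_mul, sum_e_at, mul_one, e_apply]
        push_cast
        split_ifs <;> simp_all <;> ring
  exact hle hx

theorem stmt0 (r : ℕ) (hr : 2 ≤ r) :
    (MA r : Set (Fin (r + 1) → ℝ)) ∩ (DeltaA r ∩ {x | x 0 + x 1 = 1}) =
      if r = 3 then
        {v | ∃ k : Fin (r + 1), 2 ≤ (k : ℕ) ∧ (v = e r 0 - e r k ∨ v = e r 1 - e r k)}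
          ∪ {(1 / 2 : ℝ) • (e r 0 + e r 1 - e r 2 - e r 3)}
      else
        {v | ∃ k : Fin (r + 1), 2 ≤ (k : ℕ) ∧ (v = e r 0 - e r k ∨ v = e r 1 - e r k)} := by
  ext x
  simp only [Set.mem_inter_iff, SetLike.mem_coe, Set.mem_setOf_eq]
  constructor
  · rintro ⟨hM, hD, hx01⟩
    obtain ⟨hsum, hdiff⟩ := mem_MA' r hM
    obtain ⟨-, hpos⟩ := mem_DeltaA' r hD
    rw [sum_split r hr x] at hsum
    rw [sum_split r hr (fun i => max (x i) 0)] at hpos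
    have hmax0 : x 0 ≤ max (x 0) 0 := le_max_left _ _
    have hmax1 : x 1 ≤ max (x 1) 0 := le_max_left _ _
    have hTnn : (0:ℝ) ≤ ∑ i ∈ Tset r, max (x i) 0 :=
      Finset.sum_nonneg fun i _ => le_max_right _ _
    have heq0 : max (x 0) 0 = x 0 := le_antisymm (by linarith) hmax0
    have heq1 : max (x 1) 0 = x 1 := le_antisymm (by linarith) hmax1
    have hx0nn : 0 ≤ x 0 := heq0 ▸ le_max_right _ _
    have hx1nn : 0 ≤ x 1 := heq1 ▸ le_max_right _ _
    have hTzero : ∑ i ∈ Tset r, max (x i) 0 = 0 := le_antisymm (by linarith) hTnn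
    have hxT : ∀ i ∈ Tset r, x i ≤ 0 := by
      intro i hi
      have h := (Finset.sum_eq_zero_iff_of_nonneg
        (fun i _ => le_max_right (x i) 0)).1 hTzero i hi
      calc x i ≤ max (x i) 0 := le_max_left _ _
        _ = 0 := h
    have hsumT : ∑ i ∈ Tset r, x i = -1 := by linarith
    obtain ⟨n, hn⟩ := hdiff 0 1
    have hx0le : x 0 ≤ 1 := by linarith
    have hn1 : (-1:ℤ) ≤ n := by
      have h : (-1:ℝ) ≤ (n:ℝ) := by linarith
      exact_mod_cast h
    have hn2 : n ≤ 1 := by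
      have h : (n:ℝ) ≤ 1 := by linarith
      exact_mod_cast h
    interval_cases n
    · -- x 0 = 0, x 1 = 1
      push_cast at hn
      have hx0 : x 0 = 0 := by linarith
      have hx1 : x 1 = 1 := by linarith
      obtain ⟨k, hkT, hxe⟩ := case_int r x 1 0 (fin_one_ne_zero r hr)
        (fun j => by rw [mem_Tset]; tauto) hx1 hx0 hsumT hxT
        (fun i hi => by
          obtain ⟨m, hm⟩ := hdiff i 0
          exact ⟨m, by rw [← hm, hx0]; ring⟩)
      have hk := (mem_Tset r k).1 hkT
      have hkval := fin_val_ge r hr k hk.1 hk.2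
      split_ifs with h3
      · exact Set.mem_union_left _ ⟨k, hkval, Or.inr hxe⟩
      · exact ⟨k, hkval, Or.inr hxe⟩
    · -- x 0 = x 1 = 1/2
      push_cast at hn
      have hx0 : x 0 = 1/2 := by linarith
      have hx1 : x 1 = 1/2 := by linarith
      have hhalf : ∀ i ∈ Tset r, x i ≤ -(1/2) := by
        intro i hi
        obtain ⟨m, hm⟩ := hdiff i 0
        have hxi : x i = m + 1/2 := by rw [← hm, hx0]; ring
        have h0 : (m:ℝ) + 1/2 ≤ 0 := by rw [← hxi]; exact hxT i hi
        have hm0 : m < 0 := by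
          have h : (m:ℝ) < 0 := by linarith
          exact_mod_cast h
        have h1 : (m:ℝ) ≤ -1 := by exact_mod_cast (by omega : m ≤ -1)
        linarith
      have hcard : ((Tset r).card : ℝ) ≤ 2 := by
        have h := Finset.sum_le_sum hhalf
        rw [hsumT, Finset.sum_const, nsmul_eq_mul] at h
        linarith
      have hcard' : (Tset r).card ≤ 2 := by exact_mod_cast hcard
      rw [card_Tset r hr] at hcard'
      have hr23 : r = 2 ∨ r = 3 := by omega
      rcases hr23 with rfl | rfl
      · exfalso
        obtain ⟨a, ha⟩ := Finset.card_eq_one.1 (card_Tset 2 (le_refl 2))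
        have hxa : x a = -1 := by
          rw [ha, Finset.sum_singleton] at hsumT
          exact hsumT
        obtain ⟨m, hm⟩ := hdiff a 0
        rw [hxa, hx0] at hm
        have h2m : (2*m : ℤ) = -3 := by
          have h : (2*(m:ℝ)) = -3 := by push_cast; linarith
          exact_mod_cast h
        omega
      · have hceq : ∀ i ∈ Tset 3, x i = -1/2 := by
          intro i hi
          have h1 := hhalf i hi
          have hrest : ∑ j ∈ (Tset 3).erase i, x j = -1 - x i := by
            rw [← Finset.add_sum_erase _ x hi] at hsumT
            linarith
          have h : ∑ j ∈ (Tset 3).erase i, x j ≤ ∑ _j ∈ (Tset 3).erase i, (-(1/2):ℝ) :=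
            Finset.sum_le_sum (fun j hj => hhalf j (Finset.mem_of_mem_erase hj))
          rw [hrest, Finset.sum_const, Finset.card_erase_of_mem hi,
            card_Tset 3 (by norm_num), nsmul_eq_mul] at h
          norm_num at h
          linarith
        rw [if_pos rfl]
        refine Set.mem_union_right _ ?_
        exact x_eq_p3 x hx0 hx1 (fun j hj0 hj1 => hceq j ((mem_Tset 3 j).2 ⟨hj0, hj1⟩))
    · -- x 0 = 1, x 1 = 0
      push_cast at hn
      have hx0 : x 0 = 1 := by linarith
      have hx1 : x 1 = 0 := by linarith
      obtain ⟨k, hkT, hxe⟩ := case_int r x 0 1 (fin_one_ne_zero r hr).symm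
        (fun j => by rw [mem_Tset]) hx0 hx1 hsumT hxT
        (fun i hi => by
          obtain ⟨m, hm⟩ := hdiff i 1
          exact ⟨m, by rw [← hm, hx1]; ring⟩)
      have hk := (mem_Tset r k).1 hkT
      have hkval := fin_val_ge r hr k hk.1 hk.2
      split_ifs with h3
      · exact Set.mem_union_left _ ⟨k, hkval, Or.inl hxe⟩
      · exact ⟨k, hkval, Or.inl hxe⟩
  · intro hx
    by_cases h3 : r = 3
    · rw [if_pos h3] at hx
      subst h3
      rw [Set.mem_union] at hx
      rcases hx with hx | hx
      · obtain ⟨h1, h2, h3'⟩ := back_dir 3 (by norm_num) hx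
        exact ⟨h1, h2, h3'⟩
      · rw [Set.mem_singleton_iff] at hx
        subst hx
        exact ⟨p3_mem_MA, p3_mem_Delta, p3_sum⟩
    · rw [if_neg h3] at hx
      exact back_dir r hr hx
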